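/- Let $K$ and $L$ be $n \times n$ complex matrices. Then $|\mathrm{per}(K) - \mathrm{per}(L)| \leq n \cdot n! \cdot \|K - L\|_{\max} \cdot \max(\|K\|_{\max}, \|L\|_{\max})^{n-1}$, where $\|M\|_{\max} := \max_{i,j}|M_{ij}|$. -/

import Mathlib

/-- The permanent of an `n × n` complex matrix. -/
noncomputable def permanent {n : ℕ} (M : Matrix (Fin n) (Fin n) ℂ) : ℂ :=
  ∑ π : Equiv.Perm (Fin n), ∏ i, M i (π i)

/-- The max-norm of a complex matrix: the supremum of the absolute values of its entries. -/
noncomputable def maxNorm {n : ℕ} (M : Matrix (Fin n) (Fin n) ℂ) : ℝ :=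
  ⨆ i, ⨆ j, ‖M i j‖

lemma maxNorm_nonneg {n : ℕ} (M : Matrix (Fin n) (Fin n) ℂ) : 0 ≤ maxNorm M := by
  apply Real.iSup_nonneg fun i => Real.iSup_nonneg fun j => norm_nonneg _

lemma abs_le_maxNorm {n : ℕ} (M : Matrix (Fin n) (Fin n) ℂ) (i j : Fin n) :
    ‖M i j‖ ≤ maxNorm M := by
  have h1 : ‖M i j‖ ≤ ⨆ j, ‖M i j‖ :=
    le_ciSup (f := fun j => ‖M i j‖) (Set.Finite.bddAbove (Set.finite_range _)) j
  exact h1.trans (le_ciSup (f := fun i => ⨆ j, ‖M i j‖)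
    (Set.Finite.bddAbove (Set.finite_range _)) i)

lemma prod_diff_bound {ι : Type*} (s : Finset ι) (a b : ι → ℂ) (ε A : ℝ)
    (hε : 0 ≤ ε) (hA : 0 ≤ A)
    (ha : ∀ i, ‖a i‖ ≤ A) (hb : ∀ i, ‖b i‖ ≤ A)
    (hab : ∀ i, ‖a i - b i‖ ≤ ε) :
    ‖∏ i ∈ s, a i - ∏ i ∈ s, b i‖ ≤ s.card * ε * A ^ (s.card - 1) := by
  induction s using Finset.cons_induction with
  | empty => simp
  | cons j s hj ih =>
    rw [Finset.prod_cons, Finset.prod_cons, Finset.card_cons]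
    have key : a j * ∏ i ∈ s, a i - b j * ∏ i ∈ s, b i
        = (a j - b j) * ∏ i ∈ s, a i + b j * (∏ i ∈ s, a i - ∏ i ∈ s, b i) := by ring
    rw [key]
    have h1 : ‖(a j - b j) * ∏ i ∈ s, a i‖ ≤ ε * A ^ s.card := by
      rw [norm_mul]
      apply mul_le_mul (hab j) ?_ (norm_nonneg _) hε
      calc ‖∏ i ∈ s, a i‖ = ∏ i ∈ s, ‖a i‖ := norm_prod _ _
        _ ≤ ∏ _i ∈ s, A := Finset.prod_le_prod (fun _ _ => norm_nonneg _)
              (fun i _ => ha i)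
        _ = A ^ s.card := Finset.prod_const A
    have h2 : ‖b j * (∏ i ∈ s, a i - ∏ i ∈ s, b i)‖
        ≤ s.card * ε * A ^ s.card := by
      rw [norm_mul]
      calc ‖b j‖ * ‖∏ i ∈ s, a i - ∏ i ∈ s, b i‖
          ≤ A * (s.card * ε * A ^ (s.card - 1)) :=
            mul_le_mul (hb j) ih (norm_nonneg _) hA
        _ ≤ s.card * ε * A ^ s.card := by
            rcases Nat.eq_zero_or_pos s.card with h | h
            · simp [h]
            · rw [show A * (↑s.card * ε * A ^ (s.card - 1))
                  = ↑s.card * ε * (A * A ^ (s.card - 1)) by ring,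
                ← pow_succ']
              rw [Nat.sub_add_cancel h]
    calc ‖(a j - b j) * ∏ i ∈ s, a i + b j * (∏ i ∈ s, a i - ∏ i ∈ s, b i)‖
        ≤ ‖(a j - b j) * ∏ i ∈ s, a i‖
          + ‖b j * (∏ i ∈ s, a i - ∏ i ∈ s, b i)‖ := norm_add_le _ _
      _ ≤ ε * A ^ s.card + s.card * ε * A ^ s.card := add_le_add h1 h2
      _ = (↑(s.card + 1)) * ε * A ^ (s.card + 1 - 1) := by push_cast; ring_nf
      _ ≤ _ := le_refl _

/-- `|per(K) - per(L)| ≤ n · n! · ‖K-L‖_max · max(‖K‖_max, ‖L‖_max)^{n-1}`. -/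
theorem stmt2 (n : ℕ) (K L : Matrix (Fin n) (Fin n) ℂ) :
    ‖permanent K - permanent L‖ ≤
      (n : ℝ) * (n.factorial : ℝ) * maxNorm (K - L) * max (maxNorm K) (maxNorm L) ^ (n - 1) := by
  set ε := maxNorm (K - L)
  set A := max (maxNorm K) (maxNorm L)
  have hε : 0 ≤ ε := maxNorm_nonneg _
  have hA : 0 ≤ A := le_max_of_le_left (maxNorm_nonneg K)
  have key : ∀ π : Equiv.Perm (Fin n),
      ‖∏ i, K i (π i) - ∏ i, L i (π i)‖ ≤ n * ε * A ^ (n - 1) := by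
    intro π
    have := prod_diff_bound Finset.univ (fun i => K i (π i)) (fun i => L i (π i)) ε A hε hA
      (fun i => (abs_le_maxNorm K i (π i)).trans (le_max_left _ _))
      (fun i => (abs_le_maxNorm L i (π i)).trans (le_max_right _ _))
      (fun i => abs_le_maxNorm (K - L) i (π i))
    simpa using this
  have hsum : permanent K - permanent L
      = ∑ π : Equiv.Perm (Fin n), (∏ i, K i (π i) - ∏ i, L i (π i)) := by
    rw [permanent, permanent, ← Finset.sum_sub_distrib]
  rw [hsum]
  calc ‖∑ π : Equiv.Perm (Fin n), (∏ i, K i (π i) - ∏ i, L i (π i))‖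
      ≤ ∑ π : Equiv.Perm (Fin n), ‖∏ i, K i (π i) - ∏ i, L i (π i)‖ := by
        exact norm_sum_le _ _
    _ ≤ ∑ _π : Equiv.Perm (Fin n), (n * ε * A ^ (n - 1)) :=
        Finset.sum_le_sum fun π _ => key π
    _ = (n.factorial : ℝ) * (n * ε * A ^ (n - 1)) := by
        rw [Finset.sum_const, Finset.card_univ, Fintype.card_perm, Fintype.card_fin, nsmul_eq_mul]
    _ = (n : ℝ) * (n.factorial : ℝ) * ε * A ^ (n - 1) := by ring
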